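/- Let G be an r-regular graph with n vertices, m ≥ 1 edges, r ≥ 2, and α ∈ [0,1). Then the A_α-characteristic polynomial of l(G) satisfies P_{A_α(l(G))}(λ) = (λ − 2rα + 2)^{m−n} (1−α)^n P_{Q(G)}((λ − 2rα + 2)/(1−α)), where Q(G) = D(G) + A(G) is the signless Laplacian. -/

import Mathlib

open Matrix SimpleGraph Finset

noncomputable def Aalpha {V : Type*} [Fintype V] (α : ℝ) (G : SimpleGraph V) : Matrix V V ℝ :=
  letI := Classical.decEq V
  letI : DecidableRel G.Adj := Classical.decRel _
  α • Matrix.diagonal (fun v => (G.degree v : ℝ)) + (1 - α) • G.adjMatrix ℝ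

noncomputable instance edgeSetFintype {V : Type*} [Fintype V] (G : SimpleGraph V) :
    Fintype G.edgeSet :=
  Set.Finite.fintype (Set.toFinite _)

open scoped Classical in
noncomputable def incB {V : Type*} [Fintype V] (G : SimpleGraph V) : Matrix V G.edgeSet ℝ :=
  fun v e => if v ∈ (e : Sym2 V) then 1 else 0

noncomputable def edgeDegSum {V : Type*} [Fintype V] (G : SimpleGraph V) (e : Sym2 V) : ℝ :=
  letI := Classical.decEq V
  letI : DecidableRel G.Adj := Classical.decRel _
  Sym2.lift ⟨fun a b => (G.degree a : ℝ) + (G.degree b : ℝ), fun a b => by ring⟩ e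

section Helpers

open Polynomial

lemma evalCharpoly {n : Type*} [Fintype n] [DecidableEq n] (M : Matrix n n ℝ) (t : ℝ) :
    M.charpoly.eval t = Matrix.det (t • (1 : Matrix n n ℝ) - M) := by
  rw [Matrix.charpoly, ← Polynomial.coe_evalRingHom, RingHom.map_det]
  congr 1
  ext i j
  by_cases h : i = j
  · subst h
    simp [Matrix.charmatrix_apply_eq, Matrix.one_apply_eq]
  · simp [Matrix.charmatrix_apply_ne _ _ _ h, Matrix.one_apply_ne h]

variable {V : Type*} [Fintype V] [DecidableEq V] (G : SimpleGraph V)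

lemma incB_apply_eq [DecidableRel G.Adj] (v : V) (e : G.edgeSet) : incB G v e = G.incMatrix ℝ v ↑e := by
  classical
  rw [incB, SimpleGraph.incMatrix_apply']
  have he : (↑e : Sym2 V) ∈ G.edgeSet := e.2
  by_cases h : v ∈ (e : Sym2 V)
  · rw [if_pos h, if_pos ⟨he, h⟩]
  · rw [if_neg h, if_neg (fun hh => h hh.2)]

lemma sum_edgeSet (f : Sym2 V → ℝ) (hf : ∀ e ∉ G.edgeSet, f e = 0) :
    ∑ e : G.edgeSet, f ↑e = ∑ e : Sym2 V, f e := by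
  classical
  rw [← Finset.sum_subtype G.edgeFinset (fun x => SimpleGraph.mem_edgeFinset) f]
  exact Finset.sum_subset (Finset.subset_univ _)
    (fun x _ hx => hf x (by simpa [SimpleGraph.mem_edgeFinset] using hx))

lemma colSumB [DecidableRel G.Adj] (e : G.edgeSet) : ∑ v, incB G v e = 2 := by
  simp_rw [incB_apply_eq]
  exact G.sum_incMatrix_apply_of_mem_edgeSet e.2

lemma rowSumB [DecidableRel G.Adj] (v : V) : ∑ e : G.edgeSet, incB G v e = (G.degree v : ℝ) := by
  simp_rw [incB_apply_eq]
  rw [sum_edgeSet G (fun e => G.incMatrix ℝ v e)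
    (fun e he => G.incMatrix_of_notMem_incidenceSet (fun hh => he hh.1))]
  exact G.sum_incMatrix_apply

lemma incB_mul_self (v : V) (e : G.edgeSet) : incB G v e * incB G v e = incB G v e := by
  classical
  simp only [incB]
  by_cases h : v ∈ (e : Sym2 V) <;> simp [h]

lemma incB_mul (v : V) (e f : G.edgeSet) :
    incB G v e * incB G v f =
      if v ∈ (e : Sym2 V) ∧ v ∈ (f : Sym2 V) then (1 : ℝ) else 0 := by
  classical
  simp only [incB]
  by_cases h1 : v ∈ (e : Sym2 V) <;> by_cases h2 : v ∈ (f : Sym2 V) <;>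
    simp [h1, h2]

lemma BBt [DecidableRel G.Adj] :
    incB G * (incB G)ᵀ =
      Matrix.diagonal (fun v => (G.degree v : ℝ)) + G.adjMatrix ℝ := by
  ext a b
  rw [Matrix.mul_apply]
  simp_rw [Matrix.transpose_apply, incB_apply_eq]
  rw [sum_edgeSet G (fun e => G.incMatrix ℝ a e * G.incMatrix ℝ b e)
    (fun e he => by
      beta_reduce
      rw [G.incMatrix_of_notMem_incidenceSet (fun hh => he hh.1), zero_mul])]
  have h := congrFun (congrFun (G.incMatrix_mul_transpose (R := ℝ)) a) b
  rw [Matrix.mul_apply] at h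
  simp_rw [Matrix.transpose_apply] at h
  rw [h]
  by_cases hab : a = b
  · subst hab
    simp [Matrix.diagonal_apply_eq]
  · simp [Matrix.diagonal_apply_ne _ hab, hab]

open scoped Classical in
lemma BtB :
    (incB G)ᵀ * incB G =
      (2 : ℝ) • (1 : Matrix G.edgeSet G.edgeSet ℝ) + (G.lineGraph).adjMatrix ℝ := by
  ext e f
  rw [Matrix.mul_apply]
  simp_rw [Matrix.transpose_apply]
  by_cases hef : e = f
  · subst hef
    simp_rw [incB_mul_self]
    rw [colSumB, Matrix.add_apply, Matrix.smul_apply, Matrix.one_apply_eq,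
      SimpleGraph.adjMatrix_apply, if_neg (G.lineGraph).irrefl]
    norm_num
  · simp_rw [incB_mul]
    rw [Matrix.add_apply, Matrix.smul_apply, Matrix.one_apply_ne hef, smul_zero, zero_add]
    by_cases hadj : (G.lineGraph).Adj e f
    · obtain ⟨-, v0, hv0e, hv0f⟩ := SimpleGraph.lineGraph_adj_iff_exists.mp hadj
      rw [SimpleGraph.adjMatrix_apply, if_pos hadj]
      rw [Finset.sum_boole]
      have : Finset.filter (fun v => v ∈ (e : Sym2 V) ∧ v ∈ (f : Sym2 V)) Finset.univ = {v0} := by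
        ext u
        simp only [Finset.mem_filter, Finset.mem_univ, true_and, Finset.mem_singleton]
        constructor
        · rintro ⟨hue, huf⟩
          by_contra huv
          have he' : (e : Sym2 V) = s(u, v0) := (Sym2.mem_and_mem_iff huv).mp ⟨hue, hv0e⟩
          have hf' : (f : Sym2 V) = s(u, v0) := (Sym2.mem_and_mem_iff huv).mp ⟨huf, hv0f⟩
          exact hef (Subtype.ext (he'.trans hf'.symm))
        · rintro rfl; exact ⟨hv0e, hv0f⟩
      rw [this]
      simp
    · rw [SimpleGraph.adjMatrix_apply, if_neg hadj]
      apply Finset.sum_eq_zero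
      intro v _
      rw [if_neg]
      rintro ⟨hv1, hv2⟩
      exact hadj (SimpleGraph.lineGraph_adj_iff_exists.mpr ⟨hef, v, hv1, hv2⟩)

lemma lineDeg [DecidableRel G.Adj] {r : ℕ} (hreg : G.IsRegularOfDegree r) (e : G.edgeSet)
    (inst : Fintype ((G.lineGraph).neighborSet e)) :
    ((@SimpleGraph.degree _ (G.lineGraph) e inst : ℕ) : ℝ) = 2 * r - 2 := by
  classical
  have hrow : ∑ f : G.edgeSet, ((incB G)ᵀ * incB G) e f = 2 * r := by
    simp_rw [Matrix.mul_apply, Matrix.transpose_apply]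
    rw [Finset.sum_comm]
    have : ∀ v, ∑ f : G.edgeSet, incB G v e * incB G v f = incB G v e * (G.degree v : ℝ) := by
      intro v
      rw [← Finset.mul_sum, rowSumB]
    have hreg' : ∀ v, G.degree v = r := hreg
    simp_rw [this, hreg']
    rw [← Finset.sum_mul, colSumB]
  rw [BtB] at hrow
  have hA : ∀ (inst2 : Fintype ((G.lineGraph).neighborSet e)),
      ∑ f : G.edgeSet, ((G.lineGraph).adjMatrix ℝ) e f =
        ((@SimpleGraph.degree _ (G.lineGraph) e inst2 : ℕ) : ℝ) := by
    intro inst2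
    have := SimpleGraph.adjMatrix_mulVec_const_apply (G := G.lineGraph) (α := ℝ) (a := 1) (v := e)
    rw [Matrix.mulVec, dotProduct] at this
    simp only [Function.const_apply, mul_one] at this
    rw [this]
    congr!
  have h2 : ∑ f : G.edgeSet,
      ((2 : ℝ) • (1 : Matrix G.edgeSet G.edgeSet ℝ) + (G.lineGraph).adjMatrix ℝ) e f =
      2 + ((@SimpleGraph.degree _ (G.lineGraph) e inst : ℕ) : ℝ) := by
    simp_rw [Matrix.add_apply, Finset.sum_add_distrib, hA inst]
    congr 1
    simp [Matrix.smul_apply, Matrix.one_apply, Finset.sum_ite_eq]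
  rw [h2] at hrow
  linarith

open scoped Classical in
lemma AalphaLine [DecidableRel G.Adj] {r : ℕ} (hreg : G.IsRegularOfDegree r) (α : ℝ) :
    Aalpha α (G.lineGraph) =
      (1 - α) • ((incB G)ᵀ * incB G) +
        (2 * (r : ℝ) * α - 2) • (1 : Matrix G.edgeSet G.edgeSet ℝ) := by
  classical
  ext e f
  have hBtB := congrFun (congrFun (BtB G) e) f
  simp only [Matrix.add_apply, Matrix.smul_apply, smul_eq_mul, Matrix.one_apply,
    SimpleGraph.adjMatrix, Matrix.of_apply] at hBtB
  simp only [Aalpha, Matrix.add_apply, Matrix.smul_apply, smul_eq_mul, Matrix.diagonal,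
    Matrix.of_apply, SimpleGraph.adjMatrix, Matrix.one_apply]
  rw [hBtB]
  by_cases hef : e = f
  · subst hef
    rw [lineDeg G hreg e _]
    by_cases hadj : (G.lineGraph).Adj e e
    · exact absurd hadj (G.lineGraph).irrefl
    · rw [if_pos rfl, if_pos rfl, if_neg hadj]
      ring
  · rw [if_neg hef, if_neg hef]
    by_cases hadj : (G.lineGraph).Adj e f
    · rw [if_pos hadj]; ring
    · rw [if_neg hadj]; ring

lemma wein {p q : Type*} [Fintype p] [Fintype q] [DecidableEq p] [DecidableEq q]
    (B : Matrix p q ℝ) (c x : ℝ) (hx : x ≠ 0) (h : Fintype.card p ≤ Fintype.card q) :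
    Matrix.det (x • (1 : Matrix q q ℝ) - c • (Bᵀ * B)) =
      x ^ (Fintype.card q - Fintype.card p) *
        Matrix.det (x • (1 : Matrix p p ℝ) - c • (B * Bᵀ)) := by
  have h1 : x • (1 : Matrix q q ℝ) - c • (Bᵀ * B) = x • (1 + ((-(c/x)) • Bᵀ) * B) := by
    rw [Matrix.smul_mul, smul_add, smul_smul, mul_neg, mul_div_cancel₀ _ hx, neg_smul,
      ← sub_eq_add_neg]
  have h2 : (1 : Matrix p p ℝ) + B * ((-(c/x)) • Bᵀ) =
      x⁻¹ • (x • (1 : Matrix p p ℝ) - c • (B * Bᵀ)) := by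
    rw [Matrix.mul_smul, smul_sub, smul_smul, smul_smul, inv_mul_cancel₀ hx, one_smul,
      neg_smul, ← sub_eq_add_neg]
    congr 2
    field_simp
  rw [h1, Matrix.det_smul, Matrix.det_one_add_mul_comm, h2, Matrix.det_smul]
  rw [pow_sub₀ _ hx h, inv_pow]
  ring

end Helpers

theorem stmt12 {V : Type*} [Fintype V] [DecidableEq V] (G : SimpleGraph V)
    [DecidableRel G.Adj] (r : ℕ) (hr : 2 ≤ r) (hreg : G.IsRegularOfDegree r)
    (hm : 1 ≤ Fintype.card G.edgeSet) (α : ℝ) (hα : α ∈ Set.Ico (0:ℝ) 1) (lam : ℝ) :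
    (Aalpha α (G.lineGraph)).charpoly.eval lam =
      (lam - 2 * (r : ℝ) * α + 2) ^ (Fintype.card G.edgeSet - Fintype.card V) *
        (1 - α) ^ (Fintype.card V) *
          (Matrix.diagonal (fun v => (G.degree v : ℝ)) + G.adjMatrix ℝ).charpoly.eval
            ((lam - 2 * (r : ℝ) * α + 2) / (1 - α)) := by
  classical
  have hc : (1 : ℝ) - α ≠ 0 := by
    have := hα.2; intro h; linarith
  -- n ≤ m
  have hnm : Fintype.card V ≤ Fintype.card G.edgeSet := by
    have hsum := G.sum_degrees_eq_twice_card_edges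
    rw [Finset.sum_congr rfl (fun v _ => hreg v), Finset.sum_const, Finset.card_univ,
      smul_eq_mul] at hsum
    have key : Fintype.card V * r = 2 * Fintype.card G.edgeSet := by
      rw [hsum]
      congr 1
      simp only [SimpleGraph.edgeFinset, Set.toFinset_card]
      congr!
    have h1 : Fintype.card V * 2 ≤ Fintype.card V * r := Nat.mul_le_mul_left _ hr
    linarith [h1, key]
  set n := Fintype.card V with hn
  set m := Fintype.card G.edgeSet with hmdef
  -- the main identity for all x with x - 2rα + 2 ≠ 0
  have H : ∀ x : ℝ, x - 2 * (r : ℝ) * α + 2 ≠ 0 →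
      (Aalpha α (G.lineGraph)).charpoly.eval x =
        (x - 2 * (r : ℝ) * α + 2) ^ (m - n) * (1 - α) ^ n *
          (Matrix.diagonal (fun v => (G.degree v : ℝ)) + G.adjMatrix ℝ).charpoly.eval
            ((x - 2 * (r : ℝ) * α + 2) / (1 - α)) := by
    intro x hx
    set μ := x - 2 * (r : ℝ) * α + 2 with hμdef
    rw [evalCharpoly, evalCharpoly]
    have hstep1 : x • (1 : Matrix G.edgeSet G.edgeSet ℝ) - Aalpha α (G.lineGraph) =
        μ • 1 - (1 - α) • ((incB G)ᵀ * incB G) := by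
      rw [AalphaLine G hreg α]
      have hμ : μ = x - (2 * (r : ℝ) * α - 2) := by rw [hμdef]; ring
      rw [hμ]
      module
    rw [hstep1, wein (incB G) (1 - α) μ hx hnm, BBt G]
    have hstep2 : μ • (1 : Matrix V V ℝ) -
        (1 - α) • (Matrix.diagonal (fun v => (G.degree v : ℝ)) + G.adjMatrix ℝ) =
        (1 - α) • ((μ / (1 - α)) • (1 : Matrix V V ℝ) -
          (Matrix.diagonal (fun v => (G.degree v : ℝ)) + G.adjMatrix ℝ)) := by
      rw [smul_sub, smul_smul, mul_div_cancel₀ _ hc]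
    rw [hstep2, Matrix.det_smul]
    ring
  by_cases hx : lam - 2 * (r : ℝ) * α + 2 ≠ 0
  · exact H lam hx
  · -- continuity argument at the excluded point
    push_neg at hx
    have hdense : Dense ({2 * (r : ℝ) * α - 2}ᶜ : Set ℝ) := dense_compl_singleton _
    have hfc : Continuous fun x : ℝ => (Aalpha α (G.lineGraph)).charpoly.eval x :=
      (Aalpha α (G.lineGraph)).charpoly.continuous
    have hgc : Continuous fun x : ℝ =>
        (x - 2 * (r : ℝ) * α + 2) ^ (m - n) * (1 - α) ^ n *
          (Matrix.diagonal (fun v => (G.degree v : ℝ)) + G.adjMatrix ℝ).charpoly.eval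
            ((x - 2 * (r : ℝ) * α + 2) / (1 - α)) := by
      apply Continuous.mul
      · exact (((continuous_id.sub continuous_const).add continuous_const).pow _).mul
          continuous_const
      · exact (Matrix.diagonal (fun v => (G.degree v : ℝ)) +
          G.adjMatrix ℝ).charpoly.continuous.comp
          (((continuous_id.sub continuous_const).add continuous_const).div_const _)
    have heq := Continuous.ext_on hdense hfc hgc (fun x hxmem => by
      apply H x
      intro h0
      apply hxmem
      simp only [Set.mem_singleton_iff]
      linarith)
    exact congrFun heq lam
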